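/- The tree In_ω of all injective functions f : α → ω (α a countable-or-arbitrary ordinal) ordered by inclusion is not the union of countably many antichains. -/

import Mathlib

/-- The tree `In_ω` of injective functions from ordinals into `ω`, coded by
their (injective) partial inverses `g : ℕ → Option Ordinal`: the first
condition says the original function is well defined (each ordinal is hit by
at most one `n`), and the second says that the set of ordinal values is
downward closed, i.e. the domain of the original function is an ordinal. -/
def InOmega : Type 1 :=
  {g : ℕ → Option Ordinal //
    (∀ m n β, g m = some β → g n = some β → m = n) ∧
    (∀ β γ : Ordinal, β < γ → (∃ n, g n = some γ) → ∃ m, g m = some β)}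

/-- `In_ω` is ordered by extension of the coded injective functions. -/
instance : PartialOrder InOmega where
  le f g := ∀ n β, f.1 n = some β → g.1 n = some β
  le_refl f := fun _ _ h => h
  le_trans f g h hfg hgh := fun n β hb => hgh n β (hfg n β hb)
  le_antisymm f g hfg hgf := by
    apply Subtype.ext; funext n
    cases hf : f.1 n with
    | none =>
      cases hg : g.1 n with
      | none => rfl
      | some β => exact absurd (hgf n β hg) (by simp [hf])
    | some β => exact (hfg n β hf).symm

lemma InOmega.le_def (f g : InOmega) : f ≤ g ↔ ∀ n β, f.1 n = some β → g.1 n = some β :=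
  Iff.rfl

/-- One-point extension: any element of `In_ω` can be properly extended using
any prescribed unused natural number `n₀`. -/
lemma InOmega.one_point (f : InOmega) (n₀ : ℕ) (h0 : f.1 n₀ = none) :
    ∃ g : InOmega, f ≤ g ∧ f ≠ g ∧ ∀ n β, g.1 n = some β → f.1 n = some β ∨ n = n₀ := by
  classical
  set v : ℕ → Ordinal := fun m => (f.1 m).elim 0 (· + 1) with hv
  set δ : Ordinal := ⨆ m, v m with hδ
  have ha : ∀ m β, f.1 m = some β → β < δ := by
    intro m β hm
    have hvm : v m = β + 1 := by simp [hv, hm]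
    have : β < v m := by rw [hvm]; exact mod_cast Order.lt_add_one_iff.mpr le_rfl
    exact lt_of_lt_of_le this (Ordinal.le_iSup v m)
  have hc : ∀ β, β < δ → ∃ m, f.1 m = some β := by
    intro β hβ
    rw [hδ, Ordinal.lt_iSup_iff] at hβ
    obtain ⟨m, hm⟩ := hβ
    cases hf : f.1 m with
    | none => simp [hv, hf] at hm
    | some γ =>
      have hvm : v m = γ + 1 := by simp [hv, hf]
      rw [hvm] at hm
      have hβγ : β ≤ γ := by exact mod_cast Order.lt_add_one_iff.mp hm
      rcases eq_or_lt_of_le hβγ with rfl | hlt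
      · exact ⟨m, hf⟩
      · exact f.2.2 β γ hlt ⟨m, hf⟩
  have hdn : ∀ m, f.1 m ≠ some δ := fun m hm => absurd (ha m δ hm) (lt_irrefl δ)
  refine ⟨⟨Function.update f.1 n₀ (some δ), ?_, ?_⟩, ?_, ?_, ?_⟩
  · -- injectivity
    intro m n β hm hn
    by_cases hmn : m = n₀ <;> by_cases hnn : n = n₀
    · rw [hmn, hnn]
    · rw [hmn, Function.update_self] at hm
      rw [Function.update_of_ne hnn] at hn
      exact absurd (hm.symm ▸ hn) (hdn n)
    · rw [hnn, Function.update_self] at hn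
      rw [Function.update_of_ne hmn] at hm
      exact absurd (hn.symm ▸ hm) (hdn m)
    · rw [Function.update_of_ne hmn] at hm
      rw [Function.update_of_ne hnn] at hn
      exact f.2.1 m n β hm hn
  · -- downward closure
    intro β γ hβγ ⟨n, hn⟩
    by_cases hnn : n = n₀
    · rw [hnn, Function.update_self] at hn
      have hγδ : δ = γ := by injection hn
      subst hγδ
      obtain ⟨m, hm⟩ := hc β hβγ
      have hmn : m ≠ n₀ := fun h => by rw [h, h0] at hm; exact absurd hm (by simp)
      exact ⟨m, by rw [Function.update_of_ne hmn]; exact hm⟩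
    · rw [Function.update_of_ne hnn] at hn
      obtain ⟨m, hm⟩ := f.2.2 β γ hβγ ⟨n, hn⟩
      have hmn : m ≠ n₀ := fun h => by rw [h, h0] at hm; exact absurd hm (by simp)
      exact ⟨m, by rw [Function.update_of_ne hmn]; exact hm⟩
  · -- f ≤ g
    intro n β hn
    have hnn : n ≠ n₀ := fun h => by rw [h, h0] at hn; exact absurd hn (by simp)
    show Function.update f.1 n₀ (some δ) n = some β
    rw [Function.update_of_ne hnn]; exact hn
  · -- f ≠ g
    intro h
    have h' : f.1 n₀ = Function.update f.1 n₀ (some δ) n₀ :=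
      congrArg (fun t : InOmega => t.1 n₀) h
    rw [Function.update_self, h0] at h'
    exact absurd h' (by simp)
  · -- increments
    intro n β hn
    change Function.update f.1 n₀ (some δ) n = some β at hn
    by_cases hnn : n = n₀
    · exact Or.inr hnn
    · left; rwa [Function.update_of_ne hnn] at hn

/-- The least upper bound of an increasing `ω`-chain in `In_ω`. -/
lemma InOmega.chain_sup (c : ℕ → InOmega) (hc : ∀ j k, j ≤ k → c j ≤ c k) :
    ∃ F : InOmega, (∀ k, c k ≤ F) ∧ (∀ n β, F.1 n = some β → ∃ k, (c k).1 n = some β) := by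
  classical
  set G : ℕ → Option Ordinal :=
    fun n => if h : ∃ β, ∃ k, (c k).1 n = some β then some h.choose else none with hG
  have uniq : ∀ n β γ, (∃ k, (c k).1 n = some β) → (∃ j, (c j).1 n = some γ) → β = γ := by
    intro n β γ ⟨k, hk⟩ ⟨j, hj⟩
    rcases le_total k j with h | h
    · have h2 := hc k j h n β hk
      rw [hj] at h2; injection h2 with h2; exact h2.symm
    · have h2 := hc j k h n γ hj
      rw [hk] at h2; injection h2 with h2
  have keyG : ∀ n β, G n = some β ↔ ∃ k, (c k).1 n = some β := by
    intro n β
    constructor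
    · intro h
      rw [hG] at h
      simp only at h
      split_ifs at h with h'
      · have hs := h'.choose_spec
        have : h'.choose = β := by injection h
        exact this ▸ hs
    · intro hk
      have h' : ∃ β, ∃ k, (c k).1 n = some β := ⟨β, hk⟩
      simp only [hG, dif_pos h']
      exact congrArg some (uniq n h'.choose β h'.choose_spec hk)
  refine ⟨⟨G, ?_, ?_⟩, ?_, ?_⟩
  · intro m n β hm hn
    obtain ⟨k, hk⟩ := (keyG m β).mp hm
    obtain ⟨j, hj⟩ := (keyG n β).mp hn
    have hk' := hc k (max k j) (le_max_left k j) m β hk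
    have hj' := hc j (max k j) (le_max_right k j) n β hj
    exact (c (max k j)).2.1 m n β hk' hj'
  · intro β γ hβγ ⟨n, hn⟩
    obtain ⟨k, hk⟩ := (keyG n γ).mp hn
    obtain ⟨m, hm⟩ := (c k).2.2 β γ hβγ ⟨n, hk⟩
    exact ⟨m, (keyG m β).mpr ⟨k, hm⟩⟩
  · intro k n β hn
    exact (keyG n β).mpr ⟨k, hn⟩
  · intro n β hn
    exact (keyG n β).mp hn

/-- States of the recursive construction: an element of the tree together with
an infinite set of unused natural numbers. -/
structure InOmegaSt where
  f : InOmega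
  b : Set ℕ
  hb : b.Infinite
  hdisj : ∀ n ∈ b, f.1 n = none

/-- The one-step extension of the recursive construction. -/
lemma InOmegaSt.step (A : ℕ → Set InOmega) (k : ℕ) (s : InOmegaSt) :
    ∃ t : InOmegaSt, s.f ≤ t.f ∧ s.f ≠ t.f ∧ t.b ⊆ s.b ∧
      (∀ n β, t.f.1 n = some β → s.f.1 n = some β ∨ n ∈ s.b) ∧
      (∃ x ∈ s.b, x ∉ t.b ∧ t.f.1 x = none) ∧
      ((∃ g : InOmega, s.f ≤ g ∧ s.f ≠ g ∧ g ∈ A k ∧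
          (∀ n β, g.1 n = some β → s.f.1 n = some β ∨ n ∈ s.b) ∧
          {n ∈ s.b | g.1 n = none}.Infinite) → t.f ∈ A k) := by
  classical
  by_cases hP : ∃ g : InOmega, s.f ≤ g ∧ s.f ≠ g ∧ g ∈ A k ∧
      (∀ n β, g.1 n = some β → s.f.1 n = some β ∨ n ∈ s.b) ∧
      {n ∈ s.b | g.1 n = none}.Infinite
  · obtain ⟨g, hle, hne, hmem, hincr, hinf⟩ := hP
    obtain ⟨x, hx⟩ := hinf.nonempty
    refine ⟨⟨g, {n ∈ s.b | g.1 n = none} \ {x}, hinf.diff (Set.finite_singleton x),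
      fun n hn => hn.1.2⟩, hle, hne, ?_, hincr, ⟨x, hx.1, ?_, hx.2⟩, fun _ => hmem⟩
    · intro n hn; exact hn.1.1
    · intro h; exact h.2 rfl
  · obtain ⟨n₀, hn₀, x, hx, hnex⟩ := s.hb.nontrivial
    obtain ⟨g, hle, hne, hincr⟩ := s.f.one_point n₀ (s.hdisj n₀ hn₀)
    have hxn : ∀ m, m ∈ s.b → m ≠ n₀ → g.1 m = none := by
      intro m hm hmn
      cases hgm : g.1 m with
      | none => rfl
      | some β =>
        rcases hincr m β hgm with h | h
        · rw [s.hdisj m hm] at h; exact absurd h (by simp)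
        · exact absurd h hmn
    refine ⟨⟨g, s.b \ {n₀, x}, s.hb.diff (Set.toFinite {n₀, x}), ?_⟩, hle, hne, ?_,
      ?_, ⟨x, hx, ?_, hxn x hx (Ne.symm hnex)⟩, fun h => absurd h hP⟩
    · intro m hm
      exact hxn m hm.1 (fun h => hm.2 (by rw [h]; left; rfl))
    · intro m hm; exact hm.1
    · intro n β hn
      rcases hincr n β hn with h | h
      · exact Or.inl h
      · exact Or.inr (h ▸ hn₀)
    · intro h; exact h.2 (by right; rfl)

/-- `In_ω` is not the union of countably many antichains. -/
theorem inOmega_not_special :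
    ¬ ∃ A : ℕ → Set InOmega,
        (∀ n, IsAntichain (· ≤ ·) (A n)) ∧ (⋃ n, A n) = Set.univ := by
  rintro ⟨A, hA, hcov⟩
  have hcov' : ∀ f : InOmega, ∃ m, f ∈ A m := by
    intro f
    have : f ∈ ⋃ n, A n := hcov ▸ Set.mem_univ f
    exact Set.mem_iUnion.mp this
  choose stp h1 h2 h3 h4 h5 h6 using InOmegaSt.step A
  choose xk hxk1 hxk2 hxk3 using h5
  -- the base state and the recursively constructed sequence of states
  let s₀ : InOmegaSt := ⟨⟨fun _ => none, fun m n β hm => absurd hm (by simp),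
      fun β γ _ h => absurd h.choose_spec (by simp)⟩,
    Set.univ, Set.infinite_univ, fun _ _ => rfl⟩
  let seq : ℕ → InOmegaSt := fun k => Nat.rec s₀ (fun k ih => stp k ih) k
  have hseq : ∀ k, seq (k + 1) = stp k (seq k) := fun _ => rfl
  -- chain properties
  have chf : ∀ j k, j ≤ k → (seq j).f ≤ (seq k).f := by
    intro j k h
    induction k, h using Nat.le_induction with
    | base => exact le_refl _
    | succ k hk ih => exact le_trans ih (by rw [hseq]; exact h1 k (seq k))
  have chb : ∀ j k, j ≤ k → (seq k).b ⊆ (seq j).b := by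
    intro j k h
    induction k, h using Nat.le_induction with
    | base => exact subset_rfl
    | succ k hk ih => exact subset_trans (by rw [hseq]; exact h3 k (seq k)) ih
  -- the limit element
  obtain ⟨F, hle, hdef⟩ := InOmega.chain_sup (fun k => (seq k).f) chf
  have incr : ∀ k n β, F.1 n = some β → ((seq k).f).1 n = some β ∨ n ∈ (seq k).b := by
    intro k n β h
    obtain ⟨j, hj⟩ := hdef n β h
    rcases le_total j k with hjk | hkj
    · exact Or.inl (chf j k hjk n β hj)
    · clear h
      induction j, hkj using Nat.le_induction with
      | base => exact Or.inl hj
      | succ j hkj ih =>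
        rw [hseq] at hj
        rcases h4 j (seq j) n β hj with h | h
        · exact ih h
        · exact Or.inr (chb k j hkj h)
  have Fne : ∀ k, (seq k).f ≠ F := by
    intro k hk
    apply h2 k (seq k)
    rw [← hseq]
    exact le_antisymm (chf k (k + 1) (Nat.le_succ k)) (hk ▸ hle (k + 1))
  -- the reserved elements
  set x : ℕ → ℕ := fun k => xk k (seq k) with hxdef
  have px1 : ∀ k, x k ∈ (seq k).b := fun k => hxk1 k (seq k)
  have px2 : ∀ k, x k ∉ (seq (k + 1)).b := fun k => by rw [hseq]; exact hxk2 k (seq k)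
  have px3 : ∀ k, ((seq (k + 1)).f).1 (x k) = none := fun k => by
    rw [hseq]; exact hxk3 k (seq k)
  have pxF : ∀ k, F.1 (x k) = none := by
    intro k
    cases hF : F.1 (x k) with
    | none => rfl
    | some β =>
      exfalso
      rcases incr (k + 1) (x k) β hF with h | h
      · rw [px3 k] at h; exact absurd h (by simp)
      · exact px2 k h
  have hxlt : ∀ i j, i < j → x i ≠ x j := by
    intro i j hij he
    exact px2 i (he ▸ chb (i + 1) j hij (px1 j))
  have xinj : Function.Injective x := by
    intro i j he
    by_contra hne
    rcases Ne.lt_or_gt hne with h | h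
    · exact hxlt i j h he
    · exact hxlt j i h he.symm
  -- final contradiction
  obtain ⟨m, hm⟩ := hcov' F
  have hinf : {n ∈ (seq m).b | F.1 n = none}.Infinite := by
    apply Set.infinite_of_injective_forall_mem (f := fun j : ℕ => x (m + j))
    · intro i j he
      have := xinj he
      omega
    · intro j
      exact ⟨chb m (m + j) (Nat.le_add_right m j) (px1 (m + j)), pxF (m + j)⟩
  have hP : (stp m (seq m)).f ∈ A m :=
    h6 m (seq m) ⟨F, hle m, Fne m, hm, incr m, hinf⟩
  rw [← hseq] at hP
  exact hA m hP hm (Fne (m + 1)) (hle (m + 1))
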